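/- In the extended affine symmetric group S̃_n, two elements of the form y^d·c and y^{d'}·c, where c = s_1 s_2 ⋯ s_{n-1} is the image of the Coxeter element and d, d' ∈ ℤ^n, are conjugate in S̃_n if and only if d_1 + ⋯ + d_n = d'_1 + ⋯ + d'_n. -/

import Mathlib

/-- An `n`-periodic permutation of `ℤ`: a bijection `v` with `v (m + n) = v m + n`. -/
def IsPeriodicPerm (n : ℕ) (v : Equiv.Perm ℤ) : Prop :=
  ∀ m : ℤ, v (m + n) = v m + n

namespace Stmt6Aux

lemma int_dvd_small {n : ℕ} {a : ℤ} (h : (n:ℤ) ∣ a) (h1 : -(n:ℤ) < a) (h2 : a < (n:ℤ)) :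
    a = 0 :=
  Int.eq_zero_of_abs_lt_dvd h (abs_lt.2 ⟨h1, h2⟩)

/-- The representative in `[1, n]` of `m` modulo `n`. -/
def R (n : ℕ) (m : ℤ) : ℕ := ((m - 1) % (n:ℤ)).toNat + 1

variable {n : ℕ}

lemma R_cast (hn : 0 < n) (m : ℤ) : (R n m : ℤ) = (m - 1) % (n:ℤ) + 1 := by
  have h1 : (0:ℤ) ≤ (m - 1) % (n:ℤ) := Int.emod_nonneg _ (by exact_mod_cast hn.ne')
  simp [R, Int.toNat_of_nonneg h1]

lemma R_pos (m : ℤ) : 1 ≤ R n m := Nat.le_add_left _ _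

lemma R_le (hn : 0 < n) (m : ℤ) : R n m ≤ n := by
  have h1 : (0:ℤ) ≤ (m - 1) % (n:ℤ) := Int.emod_nonneg _ (by exact_mod_cast hn.ne')
  have h2 : (m - 1) % (n:ℤ) < n := Int.emod_lt_of_pos _ (by exact_mod_cast hn)
  have := R_cast hn m
  omega

lemma R_dvd (hn : 0 < n) (m : ℤ) : (n:ℤ) ∣ m - R n m := by
  refine ⟨(m - 1) / n, ?_⟩
  have := Int.emod_add_mul_ediv (m - 1) (n : ℤ)
  have := R_cast hn m
  omega

lemma R_eq (hn : 0 < n) (m : ℤ) {i : ℕ} (h1 : 1 ≤ i) (h2 : i ≤ n)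
    (hd : (n:ℤ) ∣ m - i) : R n m = i := by
  have hd2 : (n:ℤ) ∣ ((i:ℤ) - R n m) := by
    have := (R_dvd hn m).sub hd
    simpa using this
  have hb1 := R_pos (n := n) m
  have hb2 := R_le hn m
  have := int_dvd_small hd2 (by push_cast; omega) (by push_cast; omega)
  omega

lemma R_add_mul (hn : 0 < n) (m k : ℤ) : R n (m + (n:ℤ) * k) = R n m := by
  refine R_eq hn _ (R_pos m) (R_le hn m) ?_
  have := R_dvd hn m
  have : (n:ℤ) ∣ (m - R n m) + (n:ℤ) * k := this.add ⟨k, rfl⟩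
  convert this using 1; ring

lemma R_congr (hn : 0 < n) {m1 m2 : ℤ} (h : (n:ℤ) ∣ m1 - m2) : R n m1 = R n m2 := by
  obtain ⟨k, hk⟩ := h
  have : m1 = m2 + (n:ℤ) * k := by omega
  rw [this, R_add_mul hn]

/-! ### Periodicity lemmas -/

lemma per_shift {v : Equiv.Perm ℤ} (hv : IsPeriodicPerm n v) (m k : ℤ) :
    v (m + k * n) = v m + k * n := by
  induction k using Int.induction_on with
  | zero => simp
  | succ k ih =>
    have := hv (m + k * n)
    push_cast
    push_cast at ih this
    rw [show m + (k + 1) * n = (m + k * n) + (n:ℤ) by ring, this, ih]; ring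
  | pred k ih =>
    have hstep : ∀ x : ℤ, v (x - n) = v x - n := by
      intro x
      have := hv (x - n)
      simp at this
      omega
    have := hstep (m + (-k) * n)
    push_cast
    push_cast at ih this
    rw [show m + (-k - 1) * n = (m + -k * n) - (n:ℤ) by ring, this, ih]; ring

lemma per_one : IsPeriodicPerm n 1 := fun m => rfl

lemma per_mul {v w : Equiv.Perm ℤ} (hv : IsPeriodicPerm n v) (hw : IsPeriodicPerm n w) :
    IsPeriodicPerm n (v * w) := by
  intro m
  simp only [Equiv.Perm.mul_apply]
  rw [hw m, hv (w m)]

lemma perm_apply_inv_self (v : Equiv.Perm ℤ) (m : ℤ) : v (v⁻¹ m) = m := v.apply_symm_apply m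

lemma perm_inv_apply_self (v : Equiv.Perm ℤ) (m : ℤ) : v⁻¹ (v m) = m := v.symm_apply_apply m

lemma per_inv {v : Equiv.Perm ℤ} (hv : IsPeriodicPerm n v) : IsPeriodicPerm n v⁻¹ := by
  intro m
  apply v.injective
  rw [perm_apply_inv_self, hv (v⁻¹ m), perm_apply_inv_self]

/-! ### The invariant `f` -/

/-- The translation-number invariant (times `n`). -/
def f (n : ℕ) (v : Equiv.Perm ℤ) : ℤ := ∑ i ∈ Finset.range n, (v i - i)

lemma f_one : f n 1 = 0 := by simp [f]

lemma f_mod {v : Equiv.Perm ℤ} (hv : IsPeriodicPerm n v) (hn : 0 < n) (m : ℤ) :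
    v m - m = v (m % n) - m % n := by
  have hsplit : m = m % n + (m / n) * n := by
    linear_combination (Int.emod_add_mul_ediv m (n:ℤ)).symm
  calc v m - m = v (m % n + (m / n) * n) - m := by rw [← hsplit]
    _ = v (m % n) - m % n := by rw [per_shift hv]; omega

lemma f_mul (hn : 0 < n) {v w : Equiv.Perm ℤ} (hv : IsPeriodicPerm n v)
    (hw : IsPeriodicPerm n w) : f n (v * w) = f n v + f n w := by
  have key : ∑ i ∈ Finset.range n, (v (w i) - w i) = ∑ i ∈ Finset.range n, (v i - i) := by
    have step1 : ∀ i : ℕ, v (w i) - w i = v ((w i) % n) - (w i) % n := fun i =>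
      f_mod hv hn (w i)
    rw [Finset.sum_congr rfl fun i _ => step1 i]
    refine Finset.sum_nbij' (fun i => ((w i) % (n:ℤ)).toNat)
      (fun j => ((w⁻¹ j) % (n:ℤ)).toNat) ?_ ?_ ?_ ?_ ?_
    · intro a _
      have h1 : (0:ℤ) ≤ (w a) % n := Int.emod_nonneg _ (by exact_mod_cast hn.ne')
      have h2 : (w a) % (n:ℤ) < n := Int.emod_lt_of_pos _ (by exact_mod_cast hn)
      simp only [Finset.mem_range]; omega
    · intro a _
      have h1 : (0:ℤ) ≤ (w⁻¹ a) % n := Int.emod_nonneg _ (by exact_mod_cast hn.ne')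
      have h2 : (w⁻¹ a) % (n:ℤ) < n := Int.emod_lt_of_pos _ (by exact_mod_cast hn)
      simp only [Finset.mem_range]; omega
    · intro a ha
      simp only [Finset.mem_range] at ha
      have h1 : (0:ℤ) ≤ (w a) % n := Int.emod_nonneg _ (by exact_mod_cast hn.ne')
      have hcast : ((((w a) % (n:ℤ)).toNat : ℤ)) = (w a) % n := Int.toNat_of_nonneg h1
      have hshift : (w a) % (n:ℤ) = w ((a:ℤ) + (-((w a) / n)) * n) := by
        rw [per_shift hw]
        linear_combination Int.emod_add_mul_ediv (w (a:ℤ)) (n:ℤ)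
      have hwin : w⁻¹ ((w a) % (n:ℤ)) = (a:ℤ) + (-((w a) / n)) * n := by
        rw [hshift, perm_inv_apply_self]
      have : (w⁻¹ ((w a) % (n:ℤ))) % (n:ℤ) = (a:ℤ) := by
        rw [hwin]
        have : ((a:ℤ) + (-((w (a:ℤ)) / n)) * n) % (n:ℤ) = (a:ℤ) % n := by
          simpa using Int.add_mul_emod_self_right (a := (a:ℤ)) (b := (-((w (a:ℤ)) / n))) (c := (n:ℤ))
        rw [this]
        exact Int.emod_eq_of_lt (by positivity) (by exact_mod_cast ha)
      simp only [hcast, this]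
      omega
    · intro a ha
      simp only [Finset.mem_range] at ha
      have h1 : (0:ℤ) ≤ (w⁻¹ a) % n := Int.emod_nonneg _ (by exact_mod_cast hn.ne')
      have hcast : ((((w⁻¹ a) % (n:ℤ)).toNat : ℤ)) = (w⁻¹ a) % n := Int.toNat_of_nonneg h1
      have hwinv := per_inv hw
      have hshift : (w⁻¹ a) % (n:ℤ) = w⁻¹ ((a:ℤ) + (-((w⁻¹ a) / n)) * n) := by
        rw [per_shift hwinv]
        linear_combination Int.emod_add_mul_ediv (w⁻¹ (a:ℤ)) (n:ℤ)
      have hwin : w ((w⁻¹ a) % (n:ℤ)) = (a:ℤ) + (-((w⁻¹ a) / n)) * n := by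
        rw [hshift, perm_apply_inv_self]
      have : (w ((w⁻¹ a) % (n:ℤ))) % (n:ℤ) = (a:ℤ) := by
        rw [hwin]
        have : ((a:ℤ) + (-((w⁻¹ (a:ℤ)) / n)) * n) % (n:ℤ) = (a:ℤ) % n := by
          simpa using Int.add_mul_emod_self_right (a := (a:ℤ)) (b := (-((w⁻¹ (a:ℤ)) / n))) (c := (n:ℤ))
        rw [this]
        exact Int.emod_eq_of_lt (by positivity) (by exact_mod_cast ha)
      simp only [hcast, this]
      omega
    · intro a _
      have h1 : (0:ℤ) ≤ (w a) % n := Int.emod_nonneg _ (by exact_mod_cast hn.ne')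
      have hcast : ((((w a) % (n:ℤ)).toNat : ℤ)) = (w a) % n := Int.toNat_of_nonneg h1
      simp only [hcast]
  calc f n (v * w) = ∑ i ∈ Finset.range n, ((v (w i) - w i) + (w i - i)) := by
        unfold f; apply Finset.sum_congr rfl; intro i _
        simp only [Equiv.Perm.mul_apply]; ring
    _ = f n v + f n w := by
        rw [Finset.sum_add_distrib, key]; rfl

lemma f_conj_eq (hn : 0 < n) {g x : Equiv.Perm ℤ} (hg : IsPeriodicPerm n g)
    (hx : IsPeriodicPerm n x) : f n (g * x * g⁻¹) = f n x := by
  have hginv := per_inv hg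
  have h1 : f n (g * x * g⁻¹) = f n g + f n x + f n g⁻¹ := by
    rw [f_mul hn (per_mul hg hx) hginv, f_mul hn hg hx]
  have h2 : f n g + f n g⁻¹ = 0 := by
    have := f_mul hn hg hginv
    rw [mul_inv_cancel] at this
    rw [f_one] at this
    omega
  omega

/-! ### Pointwise formulas for powers of the `y i` -/

lemma cond_shift (i : ℕ) (m s : ℤ) :
    ((n:ℤ) ∣ (m + s * n) - (i:ℤ)) ↔ ((n:ℤ) ∣ m - (i:ℤ)) := by
  constructor
  · intro h
    have := h.sub (⟨s, mul_comm (s) (n:ℤ)⟩ : (n:ℤ) ∣ s * n)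
    simpa [show m + s * n - (i:ℤ) - s * n = m - i by ring] using this
  · intro h
    have := h.add (⟨s, mul_comm (s) (n:ℤ)⟩ : (n:ℤ) ∣ s * n)
    simpa [show m - (i:ℤ) + s * n = m + s * n - i by ring] using this

lemma y_zpow (hn : 0 < n) {y : Equiv.Perm ℤ} {i : ℕ}
    (hyi : ∀ m : ℤ, y m = if (n : ℤ) ∣ (m - (i:ℤ)) then m + n else m) :
    ∀ (t : ℤ) (m : ℤ), (y ^ t) m = if (n : ℤ) ∣ (m - (i:ℤ)) then m + t * n else m := by
  have hinv : ∀ m : ℤ, y⁻¹ m = if (n:ℤ) ∣ (m - (i:ℤ)) then m - n else m := by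
    intro m
    apply y.injective
    rw [perm_apply_inv_self, hyi]
    by_cases h : (n:ℤ) ∣ m - (i:ℤ)
    · have h2 : (n:ℤ) ∣ (m - n) - (i:ℤ) := by
        have := (cond_shift (n := n) i m (-1)).mpr h
        simpa [show m + (-1) * n = m - (n:ℤ) by ring, ← sub_eq_add_neg] using this
      rw [if_pos h, if_pos h2]; ring
    · rw [if_neg h, if_neg h]
  intro t
  induction t using Int.induction_on with
  | zero => intro m; simp
  | succ k ih =>
    intro m
    rw [zpow_add_one, Equiv.Perm.mul_apply, hyi]
    by_cases h : (n:ℤ) ∣ m - (i:ℤ)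
    · rw [if_pos h, ih (m + n),
        if_pos (by simpa using (cond_shift (n := n) i m 1).mpr h), if_pos h]
      ring
    · rw [if_neg h, ih m, if_neg h, if_neg h]
  | pred k ih =>
    intro m
    rw [zpow_sub_one, Equiv.Perm.mul_apply, hinv]
    by_cases h : (n:ℤ) ∣ m - (i:ℤ)
    · have h' : (n:ℤ) ∣ (m - n) - (i:ℤ) := by
        have := (cond_shift (n := n) i m (-1)).mpr h
        simpa [show m + (-1) * n = m - (n:ℤ) by ring, ← sub_eq_add_neg] using this
      rw [if_pos h, ih (m - n), if_pos h', if_pos h]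
      ring
    · rw [if_neg h, ih m, if_neg h, if_neg h]

lemma y_zpow_per (hn : 0 < n) {y : Equiv.Perm ℤ} {i : ℕ}
    (hyi : ∀ m : ℤ, y m = if (n : ℤ) ∣ (m - (i:ℤ)) then m + n else m) (t : ℤ) :
    IsPeriodicPerm n (y ^ t) := by
  intro m
  rw [y_zpow hn hyi t, y_zpow hn hyi t]
  have h := cond_shift (n := n) i m 1
  simp only [one_mul] at h
  by_cases hd : (n:ℤ) ∣ m - (i:ℤ)
  · rw [if_pos (h.mpr hd), if_pos hd]; ring
  · rw [if_neg (fun hc => hd (h.mp hc)), if_neg hd]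

lemma f_y (hn : 0 < n) {y : Equiv.Perm ℤ} {i : ℕ} (h1 : 1 ≤ i) (h2 : i ≤ n)
    (hyi : ∀ m : ℤ, y m = if (n : ℤ) ∣ (m - (i:ℤ)) then m + n else m) (t : ℤ) :
    f n (y ^ t) = t * n := by
  have hmoddvd : (n:ℤ) ∣ ((i % n : ℕ) : ℤ) - (i:ℤ) := by
    refine ⟨-((i / n : ℕ) : ℤ), ?_⟩
    have h : ((i % n : ℕ) : ℤ) + (n:ℤ) * ((i / n : ℕ) : ℤ) = (i:ℤ) := by
      exact_mod_cast Nat.mod_add_div i n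
    linear_combination h
  have hsum : f n (y ^ t) = ∑ j ∈ Finset.range n,
      (if (n:ℤ) ∣ (j:ℤ) - (i:ℤ) then t * (n:ℤ) else 0) := by
    unfold f
    refine Finset.sum_congr rfl fun j _ => ?_
    rw [y_zpow hn hyi t]
    split <;> ring
  rw [hsum,
    Finset.sum_eq_single_of_mem (i % n) (Finset.mem_range.mpr (Nat.mod_lt _ hn))]
  · rw [if_pos hmoddvd]
  · intro b hb hne
    rw [Finset.mem_range] at hb
    rw [if_neg]
    intro hd
    have hd2 : (n:ℤ) ∣ (b:ℤ) - ((i % n : ℕ) : ℤ) := by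
      have := hd.sub hmoddvd
      simpa using this
    have hbm : i % n < n := Nat.mod_lt _ hn
    have := int_dvd_small hd2 (by push_cast; omega) (by push_cast; omega)
    omega

/-! ### The product of the `y (j+1) ^ e (j+1)` -/

lemma prod_apply (hn : 0 < n) {y : ℕ → Equiv.Perm ℤ}
    (hy : ∀ i : ℕ, 1 ≤ i → i ≤ n → ∀ m : ℤ,
      y i m = if (n : ℤ) ∣ (m - (i : ℤ)) then m + n else m) (e : ℕ → ℤ) :
    ∀ k, k ≤ n → ∀ m : ℤ,
      (((List.range k).map fun j => y (j + 1) ^ e (j + 1)).prod) m =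
        if R n m ≤ k then m + (n:ℤ) * e (R n m) else m := by
  intro k
  induction k with
  | zero =>
    intro _ m
    have := R_pos (n := n) m
    simp only [List.range_zero, List.map_nil, List.prod_nil, Equiv.Perm.one_apply]
    rw [if_neg (by omega)]
  | succ k ih =>
    intro hk m
    rw [List.range_succ, List.map_append, List.prod_append]
    simp only [List.map_cons, List.map_nil, List.prod_cons, List.prod_nil, mul_one,
      Equiv.Perm.mul_apply]
    have hform := y_zpow hn (hy (k + 1) (by omega) (by omega)) (e (k + 1))
    by_cases h : (n:ℤ) ∣ m - ((k + 1 : ℕ) : ℤ)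
    · have hR : R n m = k + 1 := R_eq hn m (by omega) (by omega) h
      rw [hform, if_pos h, ih (by omega)]
      have hRs : R n (m + e (k + 1) * (n:ℤ)) = k + 1 := by
        rw [show m + e (k+1) * (n:ℤ) = m + (n:ℤ) * e (k+1) by ring, R_add_mul hn, hR]
      rw [hRs, if_neg (by omega), if_pos (by omega), hR]
      ring
    · have hR : R n m ≠ k + 1 := fun hEq => h (by rw [← hEq]; exact_mod_cast R_dvd hn m)
      rw [hform, if_neg h, ih (by omega)]
      by_cases h2 : R n m ≤ k
      · rw [if_pos h2, if_pos (by omega)]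
      · rw [if_neg h2, if_neg (by omega)]

lemma prod_per (hn : 0 < n) {y : ℕ → Equiv.Perm ℤ}
    (hy : ∀ i : ℕ, 1 ≤ i → i ≤ n → ∀ m : ℤ,
      y i m = if (n : ℤ) ∣ (m - (i : ℤ)) then m + n else m) (e : ℕ → ℤ) :
    IsPeriodicPerm n (((List.range n).map fun j => y (j + 1) ^ e (j + 1)).prod) := by
  intro m
  rw [prod_apply hn hy e n le_rfl, prod_apply hn hy e n le_rfl]
  have hR : R n (m + (n:ℤ)) = R n m := by
    have := R_add_mul hn m 1
    simpa using this
  rw [hR, if_pos (R_le hn m), if_pos (R_le hn m)]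
  ring

lemma f_prod (hn : 0 < n) {y : ℕ → Equiv.Perm ℤ}
    (hy : ∀ i : ℕ, 1 ≤ i → i ≤ n → ∀ m : ℤ,
      y i m = if (n : ℤ) ∣ (m - (i : ℤ)) then m + n else m) (e : ℕ → ℤ) :
    ∀ k, k ≤ n →
      IsPeriodicPerm n (((List.range k).map fun j => y (j + 1) ^ e (j + 1)).prod) ∧
      f n (((List.range k).map fun j => y (j + 1) ^ e (j + 1)).prod) =
        ∑ j ∈ Finset.range k, e (j + 1) * n := by
  intro k
  induction k with
  | zero =>
    intro _
    simp only [List.range_zero, List.map_nil, List.prod_nil, Finset.range_zero,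
      Finset.sum_empty]
    exact ⟨per_one, f_one⟩
  | succ k ih =>
    intro hk
    obtain ⟨ihper, ihf⟩ := ih (by omega)
    have hyper := y_zpow_per hn (hy (k + 1) (by omega) (by omega)) (e (k + 1))
    have hyf := f_y hn (by omega) (by omega) (hy (k + 1) (by omega) (by omega)) (e (k + 1))
    rw [List.range_succ, List.map_append, List.prod_append]
    simp only [List.map_cons, List.map_nil, List.prod_cons, List.prod_nil, mul_one]
    constructor
    · exact per_mul ihper hyper
    · rw [f_mul hn ihper hyper, ihf, hyf, Finset.sum_range_succ]

/-! ### The Coxeter element `c` -/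

lemma c_per (hn : 0 < n) {c : Equiv.Perm ℤ}
    (hc : ∀ m : ℤ, c m = if (n : ℤ) ∣ m then m + 1 - n else m + 1) :
    IsPeriodicPerm n c := by
  intro m
  rw [hc, hc]
  have h : (n:ℤ) ∣ m + n ↔ (n:ℤ) ∣ m := by
    constructor
    · intro h; have := h.sub (dvd_refl (n:ℤ)); simpa using this
    · intro h; exact h.add (dvd_refl _)
  by_cases hd : (n:ℤ) ∣ m
  · rw [if_pos (h.mpr hd), if_pos hd]; ring
  · rw [if_neg (fun hx => hd (h.mp hx)), if_neg hd]; ring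

lemma f_c (hn : 0 < n) {c : Equiv.Perm ℤ}
    (hc : ∀ m : ℤ, c m = if (n : ℤ) ∣ m then m + 1 - n else m + 1) :
    f n c = 0 := by
  have step : ∀ i ∈ Finset.range n, c i - i = (if i = 0 then -(n:ℤ) else 0) + 1 := by
    intro i hi
    rw [Finset.mem_range] at hi
    rw [hc]
    by_cases h : i = 0
    · subst h; rw [if_pos (by simp), if_pos rfl]; ring
    · rw [if_neg, if_neg h]
      · ring
      · intro hd
        have := int_dvd_small hd (by push_cast; omega) (by push_cast; omega)
        omega
  unfold f
  rw [Finset.sum_congr rfl step, Finset.sum_add_distrib, Finset.sum_ite_eq'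
    (Finset.range n) 0 (fun _ => -(n:ℤ)), if_pos (Finset.mem_range.mpr hn)]
  simp

lemma r_c (hn : 0 < n) {c : Equiv.Perm ℤ}
    (hc : ∀ m : ℤ, c m = if (n : ℤ) ∣ m then m + 1 - n else m + 1) (m : ℤ) :
    R n (c m) = R n (m + 1) := by
  apply R_congr hn
  rw [hc]
  by_cases h : (n:ℤ) ∣ m
  · rw [if_pos h]; exact ⟨-1, by ring⟩
  · rw [if_neg h]; simp

end Stmt6Aux

open Stmt6Aux in
/-- In `S̃_n`, the elements `y^d c` and `y^{d'} c`, with `c = s_1 ⋯ s_{n-1}` the image of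
the Coxeter element, are conjugate if and only if `d_1 + ⋯ + d_n = d'_1 + ⋯ + d'_n`. -/
theorem stmt6 (n : ℕ) (hn : 0 < n)
    (y : ℕ → Equiv.Perm ℤ)
    (hy : ∀ i : ℕ, 1 ≤ i → i ≤ n → ∀ m : ℤ,
      y i m = if (n : ℤ) ∣ (m - (i : ℤ)) then m + n else m)
    (c : Equiv.Perm ℤ)
    (hc : ∀ m : ℤ, c m = if (n : ℤ) ∣ m then m + 1 - n else m + 1)
    (d d' : ℕ → ℤ) :
    (∃ g : Equiv.Perm ℤ, IsPeriodicPerm n g ∧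
        g * (((List.range n).map fun j => y (j + 1) ^ d (j + 1)).prod * c) * g⁻¹ =
          ((List.range n).map fun j => y (j + 1) ^ d' (j + 1)).prod * c) ↔
      ∑ i ∈ Finset.range n, d (i + 1) = ∑ i ∈ Finset.range n, d' (i + 1) := by
  set P : Equiv.Perm ℤ := ((List.range n).map fun j => y (j + 1) ^ d (j + 1)).prod with hP
  set P' : Equiv.Perm ℤ := ((List.range n).map fun j => y (j + 1) ^ d' (j + 1)).prod with hP'
  have hcper := c_per hn hc
  constructor
  · rintro ⟨g, hgper, hconj⟩
    obtain ⟨hPper, hPf⟩ := f_prod hn hy d n le_rfl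
    obtain ⟨hP'per, hP'f⟩ := f_prod hn hy d' n le_rfl
    have h1 : f n (P' * c) = f n (P * c) := by
      rw [← hconj]
      exact f_conj_eq hn hgper (per_mul hPper hcper)
    rw [f_mul hn hP'per hcper, f_mul hn hPper hcper, hPf, hP'f, f_c hn hc] at h1
    have h2 : (∑ j ∈ Finset.range n, d' (j + 1)) * (n:ℤ) =
        (∑ j ∈ Finset.range n, d (j + 1)) * (n:ℤ) := by
      rw [Finset.sum_mul, Finset.sum_mul]
      omega
    have hn' : ((n:ℤ)) ≠ 0 := by exact_mod_cast hn.ne'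
    exact (mul_right_cancel₀ hn' h2).symm
  · intro hsum
    set a : ℕ → ℤ := fun i => ∑ j ∈ Finset.range i, (d' (j + 1) - d (j + 1)) with ha
    have han : a n = 0 := by
      rw [ha]
      simp only [Finset.sum_sub_distrib]
      omega
    refine ⟨⟨fun m => m + n * a (R n m), fun m => m - n * a (R n m), ?_, ?_⟩, ?_, ?_⟩
    · intro m
      simp only
      rw [R_add_mul hn]
      ring
    · intro m
      simp only
      rw [show m - (n:ℤ) * a (R n m) = m + (n:ℤ) * (-(a (R n m))) by ring, R_add_mul hn]
      ring
    · intro m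
      simp only [Equiv.coe_fn_mk]
      rw [show m + (n:ℤ) = m + (n:ℤ) * 1 by ring, R_add_mul hn]
      ring
    · rw [mul_inv_eq_iff_eq_mul]
      ext m
      simp only [Equiv.Perm.mul_apply, Equiv.coe_fn_mk]
      -- notation
      have hPapp : ∀ m : ℤ, P m = if R n m ≤ n then m + (n:ℤ) * d (R n m) else m :=
        prod_apply hn hy d n le_rfl
      have hP'app : ∀ m : ℤ, P' m = if R n m ≤ n then m + (n:ℤ) * d' (R n m) else m :=
        prod_apply hn hy d' n le_rfl
      set r : ℕ := R n m with hr
      set r' : ℕ := R n (m + 1) with hr'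
      have hRcm : R n (c m) = r' := r_c hn hc m
      -- key combinatorial identity
      have key : a r' = a r + (d' r' - d r') := by
        have hr1 : 1 ≤ r := R_pos m
        have hr2 : r ≤ n := R_le hn m
        by_cases hcase : r < n
        · have hr'eq : r' = r + 1 := by
            rw [hr']
            refine R_eq hn (m + 1) (by omega) (by omega) ?_
            have := R_dvd hn m
            rw [← hr] at this
            have h2 : (m + 1) - ((r + 1 : ℕ) : ℤ) = m - (r : ℤ) := by push_cast; ring
            rw [h2]
            exact this
          simp only [hr'eq, ha, Finset.sum_range_succ]
        · have hrn : r = n := by omega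
          have hr'eq : r' = 1 := by
            rw [hr']
            refine R_eq hn (m + 1) le_rfl hn ?_
            have := R_dvd hn m
            rw [← hr, hrn] at this
            have h2 : (n:ℤ) ∣ (m - (n:ℤ)) + (n:ℤ) := this.add (dvd_refl _)
            simpa [Nat.cast_one, show m - (n:ℤ) + n = m + 1 - 1 by ring] using h2
          rw [hr'eq, hrn, han]
          simp only [ha, Finset.sum_range_one]
          ring
      -- compute both sides
      have hLHS : P (c m) + (n:ℤ) * a (R n (P (c m))) =
          c m + (n:ℤ) * d r' + (n:ℤ) * a r' := by
        have h1 : P (c m) = c m + (n:ℤ) * d r' := by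
          rw [hPapp (c m), hRcm, if_pos (by rw [← hRcm]; exact R_le hn (c m))]
        rw [h1, show c m + (n:ℤ) * d r' = c m + (n:ℤ) * (d r') from rfl, R_add_mul hn, hRcm]
      have hgm : c (m + (n:ℤ) * a r) = c m + (n:ℤ) * a r := by
        rw [show m + (n:ℤ) * a r = m + (a r) * (n:ℤ) by ring, per_shift hcper]
        ring
      have hRHS : P' (c (m + (n:ℤ) * a (R n m))) = c m + (n:ℤ) * a r + (n:ℤ) * d' r' := by
        rw [← hr, hgm, hP'app]
        have hRc2 : R n (c m + (n:ℤ) * a r) = r' := by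
          rw [R_add_mul hn, hRcm]
        rw [hRc2, if_pos (R_le hn (m + 1))]
      rw [hLHS, hRHS]
      have : (n:ℤ) * a r' = (n:ℤ) * a r + (n:ℤ) * (d' r' - d r') := by
        rw [key]; ring
      linarith [this]
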